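/- Weak soundness of F-local isomorphic rewriting: let R = (V,F,𝓡) with 𝓡 = {ℓ₁→r₁,…,ℓₙ→rₙ} and let φ = (φ₁,…,φₙ) be a family of term isomorphisms with φ(𝓡) = {φ₁(ℓ₁)→φ₁(r₁),…,φₙ(ℓₙ)→φₙ(rₙ)}. If s →_R t, then there exists an index i (namely one for which rule ℓᵢ → rᵢ is applied in the step) such that φᵢ(s) →_{φ(R)} φᵢ(t). Conversely, if φᵢ(s) rewrites to φᵢ(t) using only the single rule φᵢ(ℓᵢ) → φᵢ(rᵢ), then s →_R t. -/

import Mathlib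

set_option autoImplicit false

universe u
variable {F V F' V' F'' V'' : Type}

inductive Term (F V : Type) : Type where
  | var : V → Term F V
  | app : F → List (Term F V) → Term F V

namespace Term

def map (φF : F → F') (φV : V → V') : Term F V → Term F' V'
  | var x => var (φV x)
  | app f ts => app (φF f) (ts.attach.map fun t => map φF φV t.1)

decreasing_by
  have := List.sizeOf_lt_of_mem t.2
  simp_wf
  omega

def subst (σ : V → Term F V) : Term F V → Term F V
  | var x => σ x
  | app f ts => app f (ts.attach.map fun t => subst σ t.1)

decreasing_by
  have := List.sizeOf_lt_of_mem t.2
  simp_wf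
  omega

def vars : Term F V → Set V
  | var x => {x}
  | app _ ts => {v | ∃ t ∈ ts.attach, v ∈ vars t.1}

decreasing_by
  have := List.sizeOf_lt_of_mem t.2
  simp_wf
  omega

end Term

inductive Ctx (F V : Type) : Type where
  | hole : Ctx F V
  | app : F → List (Term F V) → Ctx F V → List (Term F V) → Ctx F V

def Ctx.fill : Ctx F V → Term F V → Term F V
  | .hole, t => t
  | .app f pre C post, t => .app f (pre ++ [C.fill t] ++ post)

def Ctx.map (φF : F → F') (φV : V → V') : Ctx F V → Ctx F' V'
  | .hole => .hole
  | .app f pre C post => .app (φF f) (pre.map (Term.map φF φV)) (C.map φF φV) (post.map (Term.map φF φV))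

abbrev Rule (F V : Type) := Term F V × Term F V

def ruleMap (φF : F → F') (φV : V → V') (p : Rule F V) : Rule F' V' :=
  (p.1.map φF φV, p.2.map φF φV)

def Rewrites (𝓡 : Set (Rule F V)) (s t : Term F V) : Prop :=
  ∃ (C : Ctx F V) (σ : V → Term F V) (p : Rule F V),
    p ∈ 𝓡 ∧ s = C.fill (p.1.subst σ) ∧ t = C.fill (p.2.subst σ)

def IsTermIso (ar : F → ℕ) (ar' : F' → ℕ) (φF : F → F') (φV : V → V') : Prop :=
  Function.Bijective φF ∧ Function.Bijective φV ∧ ∀ f, ar' (φF f) = ar f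

def IsTRS (ar : F → ℕ) (𝓡 : Set (Rule F V)) : Prop :=
  𝓡.Finite ∧ ∀ p ∈ 𝓡, (∀ x, p.1 ≠ Term.var x) ∧ p.2.vars ⊆ p.1.vars


theorem Term.my_ind {F V : Type} {P : Term F V → Prop}
    (hv : ∀ x, P (.var x)) (ha : ∀ f ts, (∀ t ∈ ts, P t) → P (.app f ts)) :
    ∀ t, P t
  | .var x => hv x
  | .app f ts => ha f ts (fun t _ => Term.my_ind hv ha t)
decreasing_by
  have := List.sizeOf_lt_of_mem (by assumption : t ∈ ts)
  simp_wf
  omega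

@[simp] theorem Term.map_var {F V F' V' : Type} (φF : F → F') (φV : V → V') (x : V) :
    Term.map φF φV (.var x) = .var (φV x) := by rw [Term.map]

@[simp] theorem Term.map_app {F V F' V' : Type} (φF : F → F') (φV : V → V')
    (f : F) (ts : List (Term F V)) :
    Term.map φF φV (.app f ts) = .app (φF f) (ts.map (Term.map φF φV)) := by
  rw [Term.map, List.map_attach_eq_pmap]
  simp

@[simp] theorem Term.subst_var {F V : Type} (σ : V → Term F V) (x : V) :
    Term.subst σ (.var x) = σ x := by rw [Term.subst]

@[simp] theorem Term.subst_app {F V : Type} (σ : V → Term F V)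
    (f : F) (ts : List (Term F V)) :
    Term.subst σ (.app f ts) = .app f (ts.map (Term.subst σ)) := by
  rw [Term.subst, List.map_attach_eq_pmap]
  simp

theorem Term.map_map {F V F' V' F'' V'' : Type} (φF : F → F') (φV : V → V')
    (ψF : F' → F'') (ψV : V' → V'') (t : Term F V) :
    Term.map ψF ψV (Term.map φF φV t) = Term.map (ψF ∘ φF) (ψV ∘ φV) t := by
  induction t using Term.my_ind with
  | hv x => simp
  | ha f ts ih =>
    simp only [Term.map_app, List.map_map, Term.app.injEq, Function.comp_apply, true_and]
    exact List.map_congr_left fun t ht => ih t ht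

theorem Term.map_id {F V F' V' : Type} (φF : F → F') (φV : V → V')
    (ψF : F' → F) (ψV : V' → V) (hF : ∀ f, ψF (φF f) = f) (hV : ∀ x, ψV (φV x) = x)
    (t : Term F V) : Term.map ψF ψV (Term.map φF φV t) = t := by
  induction t using Term.my_ind with
  | hv x => simp [hV]
  | ha f ts ih =>
    simp only [Term.map_app, List.map_map, hF, Term.app.injEq, true_and]
    exact (List.map_congr_left fun t ht => ih t ht).trans (List.map_id ts)

theorem Term.map_subst {F V F' V' : Type} (φF : F → F') (φV : V → V')
    (invV : V' → V) (hinv : ∀ x, invV (φV x) = x) (σ : V → Term F V) (t : Term F V) :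
    Term.map φF φV (Term.subst σ t)
      = Term.subst (fun y => Term.map φF φV (σ (invV y))) (Term.map φF φV t) := by
  induction t using Term.my_ind with
  | hv x => simp [hinv]
  | ha f ts ih =>
    simp only [Term.map_app, Term.subst_app, List.map_map, Term.app.injEq, true_and]
    exact List.map_congr_left fun t ht => ih t ht

theorem Ctx.map_fill {F V F' V' : Type} (φF : F → F') (φV : V → V')
    (C : Ctx F V) (t : Term F V) :
    Term.map φF φV (C.fill t) = (C.map φF φV).fill (Term.map φF φV t) := by
  induction C with
  | hole => rfl
  | app f pre C post ih =>
    simp [Ctx.fill, Ctx.map, ih]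


theorem weak_soundness_F_local_rewriting
    {F V F' V' : Type} (ar : F → ℕ) (ar' : F' → ℕ)
    (𝓡 : Set (Rule F V)) (hR : IsTRS ar 𝓡)
    (ΦF : Rule F V → F → F') (ΦV : Rule F V → V → V')
    (hiso : ∀ p ∈ 𝓡, IsTermIso ar ar' (ΦF p) (ΦV p)) :
    (∀ s t : Term F V, Rewrites 𝓡 s t →
       ∃ p ∈ 𝓡, Rewrites ((fun q => ruleMap (ΦF q) (ΦV q) q) '' 𝓡)
         (Term.map (ΦF p) (ΦV p) s) (Term.map (ΦF p) (ΦV p) t)) ∧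
    (∀ p ∈ 𝓡, ∀ s t : Term F V,
       Rewrites {ruleMap (ΦF p) (ΦV p) p}
         (Term.map (ΦF p) (ΦV p) s) (Term.map (ΦF p) (ΦV p) t) →
       Rewrites 𝓡 s t) := by
  constructor
  · rintro s t ⟨C, σ, p, hp, hs, ht⟩
    obtain ⟨hF, hV, -⟩ := hiso p hp
    set eV := Equiv.ofBijective _ hV with heV
    refine ⟨p, hp, C.map (ΦF p) (ΦV p),
      fun y => Term.map (ΦF p) (ΦV p) (σ (eV.symm y)), ruleMap (ΦF p) (ΦV p) p,
      ⟨p, hp, rfl⟩, ?_, ?_⟩ <;>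
      simp only [hs, ht, Ctx.map_fill, ruleMap,
        Term.map_subst (ΦF p) (ΦV p) eV.symm (fun x => eV.symm_apply_apply x) σ]
  · rintro p hp s t ⟨C, σ, q, hq, hs, ht⟩
    obtain ⟨hF, hV, -⟩ := hiso p hp
    set eF := Equiv.ofBijective _ hF with heF
    set eV := Equiv.ofBijective _ hV with heV
    rw [Set.mem_singleton_iff] at hq
    subst hq
    have hmap : ∀ u : Term F V,
        Term.map eF.symm eV.symm (Term.map (ΦF p) (ΦV p) u) = u :=
      Term.map_id _ _ _ _ (fun f => eF.symm_apply_apply f) (fun x => eV.symm_apply_apply x)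
    refine ⟨C.map eF.symm eV.symm,
      fun x => Term.map eF.symm eV.symm (σ (ΦV p x)), p, hp, ?_, ?_⟩
    · have := congrArg (Term.map eF.symm eV.symm) hs
      rw [hmap, Ctx.map_fill, ruleMap,
        Term.map_subst eF.symm eV.symm (ΦV p) (fun x => eV.apply_symm_apply x) σ, hmap] at this
      exact this
    · have := congrArg (Term.map eF.symm eV.symm) ht
      rw [hmap, Ctx.map_fill, ruleMap,
        Term.map_subst eF.symm eV.symm (ΦV p) (fun x => eV.apply_symm_apply x) σ, hmap] at this
      exact this
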